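/- Let K be a cycle-free Markov kernel on a countable set G. For x, y ∈ G, let p(x,y) be the probability, under the joint law ℙ_x ⊗ ℙ_y of two independent Markov chains with kernel K started from x and y, that the two paths have no collision. Then p(x,y) ≥ p(x,x)/3 for all x, y ∈ G. -/

import Mathlib

open MeasureTheory
open scoped ENNReal
set_option linter.unusedSectionVars false

namespace CMTPaper

variable {G : Type*}

/-- The `n`-step kernel of a Markov kernel `K` on a countable set `G`:
`K^0(x,·) = δ_x` and `K^{n+1}(x,A) = Σ_y K(x,{y})·K^n(y,A)`. -/
noncomputable def nStep [MeasurableSpace G] (K : G → Measure G) : ℕ → G → Measure G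
  | 0 => fun x => Measure.dirac x
  | n + 1 => fun x => Measure.sum fun y => K x {y} • nStep K n y

/-- A kernel is cycle-free if `K^m(x,{x}) = 0` for every `x` and every `m ≥ 1`. -/
def CycleFree [MeasurableSpace G] (K : G → Measure G) : Prop :=
  ∀ x : G, ∀ m : ℕ, 1 ≤ m → nStep K m x {x} = 0

/-- `P` is the law on path space `G^ℕ` of the Markov chain with kernel `K` started at `x`
(characterized by its finite-dimensional cylinder probabilities). -/
def IsPathLaw [MeasurableSpace G] (K : G → Measure G) (x : G) (P : Measure (ℕ → G)) : Prop :=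
  ∀ (n : ℕ) (u : ℕ → G), u 0 = x →
    P {ω | ∀ i ≤ n, ω i = u i} = ∏ i ∈ Finset.range n, K (u i) {u (i + 1)}

/-- The set of collisions of two paths: pairs `(m,n)` with `m,n ≥ 1` and `ω m = ω' n`. -/
def collisions (ω ω' : ℕ → G) : Set (ℕ × ℕ) :=
  {p : ℕ × ℕ | 1 ≤ p.1 ∧ 1 ≤ p.2 ∧ ω p.1 = ω' p.2}

/-- `μ` is the law on `G^G` of the coalescing Markov trajectories (CMT) with kernel `K`,
i.e. the product measure `⊗_x K(x,·)` (characterized on cylinders). -/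
def IsCMTLaw [MeasurableSpace G] (K : G → Measure G) (μ : Measure (G → G)) : Prop :=
  ∀ (s : Finset G) (u : G → G), μ {f | ∀ x ∈ s, f x = u x} = ∏ x ∈ s, K x {u x}

/-- Adjacency in the graph of `f`: an edge between `x` and `f x` for every `x`. -/
def Adj (f : G → G) (a b : G) : Prop := f a = b ∨ f b = a

/-- `a` and `b` lie in the same connected component of the graph of `f`. -/
def SameComponent (f : G → G) (a b : G) : Prop := Relation.ReflTransGen (Adj f) a b

/-- The connected component of `v` in the graph of `f`. -/
def component (f : G → G) (v : G) : Set G := {u | SameComponent f u v}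

/-- The level set of `v`: points whose forward orbit merges with that of `v` after the same
number of steps. -/
def levelSet (f : G → G) (v : G) : Set G := {w | ∃ n : ℕ, f^[n] w = f^[n] v}

/-- The ancestor-line map `π (v, f) = (f^{(n)}(v))_{n ≥ 0}`. -/
def ancLine : G × (G → G) → ℕ → G := fun p n => p.2^[n] p.1

section Aux

variable [Countable G] [MeasurableSpace G] [MeasurableSingletonClass G]

/-- every subset of G is measurable -/
lemma measSet_all (S : Set G) : MeasurableSet S := S.to_countable.measurableSet

lemma measSet_eqG {α : Type*} [MeasurableSpace α] {f g : α → G} (hf : Measurable f)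
    (hg : Measurable g) : MeasurableSet {a | f a = g a} := by
  have : {a | f a = g a} = ⋃ c : G, (f ⁻¹' {c}) ∩ (g ⁻¹' {c}) := by
    ext a
    simp only [Set.mem_setOf_eq, Set.mem_iUnion, Set.mem_inter_iff, Set.mem_preimage,
      Set.mem_singleton_iff]
    exact ⟨fun h => ⟨g a, h, rfl⟩, fun ⟨c, h1, h2⟩ => h1.trans h2.symm⟩
  rw [this]
  exact MeasurableSet.iUnion fun c =>
    (hf (measurableSet_singleton c)).inter (hg (measurableSet_singleton c))

lemma measSet_neG {α : Type*} [MeasurableSpace α] {f g : α → G} (hf : Measurable f)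
    (hg : Measurable g) : MeasurableSet {a | f a ≠ g a} :=
  (measSet_eqG hf hg).compl

/-- total mass is the sum of singleton masses -/
lemma meas_univ_eq_tsum (μ : Measure G) : μ Set.univ = ∑' a : G, μ {a} := by
  have : (Set.univ : Set G) = ⋃ a : G, {a} := by ext a; simp
  rw [this, measure_iUnion (fun a b hab => by simpa using hab) (fun a => measSet_all _)]

/-- The cylinder set of level `N`. -/
def Cyl (N : ℕ) (u : ℕ → G) : Set (ℕ → G) := {ω | ∀ i ≤ N, ω i = u i}

lemma measSet_cyl (N : ℕ) (u : ℕ → G) : MeasurableSet (Cyl N u) := by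
  have : Cyl N u = ⋂ i ∈ Finset.range (N+1), {ω : ℕ → G | ω i = u i} := by
    ext ω
    simp only [Cyl, Set.mem_setOf_eq, Set.mem_iInter, Finset.mem_range]
    exact ⟨fun h i hi => h i (by omega), fun h i hi => h i (by omega)⟩
  rw [this]
  exact MeasurableSet.biInter (Finset.range (N+1)).countable_toSet
    (fun i _ => measSet_eqG (measurable_pi_apply i) measurable_const)

variable (K : G → Measure G)

/-- probability of a path prefix -/
noncomputable def pathP (u : ℕ → G) (N : ℕ) : ℝ≥0∞ :=
  ∏ k ∈ Finset.range N, K (u k) {u (k + 1)}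

open Classical in
noncomputable def cylP (z : G) (u : ℕ → G) (N : ℕ) : ℝ≥0∞ :=
  if u 0 = z then pathP K u N else 0

variable {K}
variable {P : G → Measure (ℕ → G)} [∀ x, IsProbabilityMeasure (P x)]
  (hP : ∀ x, IsPathLaw K x (P x))

include hP in
lemma prob_zero_coord (z : G) : P z {ω | ω 0 = z} = 1 := by
  have h := hP z 0 (fun _ => z) rfl
  simp only [Finset.range_zero, Finset.prod_empty] at h
  rw [← h]
  congr 1
  ext ω; simp [Nat.le_zero]

include hP in
lemma prob_cyl (z : G) (u : ℕ → G) (N : ℕ) : P z (Cyl N u) = cylP K z u N := by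
  unfold cylP
  classical
  by_cases h : u 0 = z
  · rw [if_pos h]; exact hP z N u h
  · rw [if_neg h]
    have hsub : Cyl N u ⊆ {ω | ω 0 = z}ᶜ := by
      intro ω hω hc
      exact h ((hω 0 (Nat.zero_le _)).symm.trans hc)
    refine measure_mono_null hsub ?_
    have := prob_zero_coord hP z
    rw [measure_compl (measSet_eqG (measurable_pi_apply 0) measurable_const)
      (measure_ne_top _ _), this]
    simp

end Aux

section Gen

variable [Countable G] [MeasurableSpace G] [MeasurableSingletonClass G]

/-- extension of a finite vector to an infinite path, with default value `c` -/
def vext (c : G) (N : ℕ) (v : Fin (N + 1) → G) : ℕ → G :=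
  fun k => if h : k ≤ N then v ⟨k, by omega⟩ else c

lemma vext_apply {c : G} {N k : ℕ} (v : Fin (N + 1) → G) (h : k ≤ N) :
    vext c N v k = v ⟨k, by omega⟩ := dif_pos h

lemma mem_cyl_vext {c : G} {N : ℕ} {ω : ℕ → G} :
    ω ∈ Cyl N (vext c N (fun k : Fin (N + 1) => ω k)) := by
  intro i hi
  rw [vext_apply _ hi]

lemma univ_eq_union_cyl (N : ℕ) (c : G) :
    (Set.univ : Set (ℕ → G)) = ⋃ v : Fin (N + 1) → G, Cyl N (vext c N v) := by
  ext ω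
  simp only [Set.mem_univ, true_iff, Set.mem_iUnion]
  exact ⟨_, mem_cyl_vext⟩

lemma coord_eq_union_cyl {i N : ℕ} (h : i ≤ N) (c : G) :
    {ω : ℕ → G | ω i = c} =
      ⋃ v : {v : Fin (N + 1) → G // v ⟨i, by omega⟩ = c}, Cyl N (vext c N v.1) := by
  ext ω
  simp only [Set.mem_setOf_eq, Set.mem_iUnion]
  constructor
  · intro hc
    exact ⟨⟨fun k => ω k, hc⟩, mem_cyl_vext⟩
  · rintro ⟨⟨v, hv⟩, hω⟩
    rw [hω i h, vext_apply _ h]; exact hv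

/-- the π-system of cylinders on path space -/
def CylSets : Set (Set (ℕ → G)) := {S | ∃ N u, S = Cyl N u}

lemma cyl_inter_of_le {N M : ℕ} (h : N ≤ M) {u v : ℕ → G}
    (hne : (Cyl N u ∩ Cyl M v).Nonempty) : Cyl N u ∩ Cyl M v = Cyl M v := by
  obtain ⟨ω, h1, h2⟩ := hne
  refine Set.inter_eq_right.mpr fun ω' hω' i hi => ?_
  rw [hω' i (le_trans hi h), ← h2 i (le_trans hi h), h1 i hi]

lemma isPiSystem_cylSets : IsPiSystem (CylSets (G := G)) := by
  rintro S ⟨N, u, rfl⟩ T ⟨M, v, rfl⟩ hne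
  rcases le_total N M with h | h
  · rw [cyl_inter_of_le h hne]; exact ⟨M, v, rfl⟩
  · rw [Set.inter_comm] at hne ⊢
    rw [cyl_inter_of_le h hne]; exact ⟨N, u, rfl⟩

/-- helper: a function into path space is measurable iff coordinate level sets are measurable -/
lemma measurable_of_coords {α : Type*} (m : MeasurableSpace α) (f : α → (ℕ → G))
    (h : ∀ i c, MeasurableSet[m] {a | f a i = c}) : @Measurable α (ℕ → G) m _ f := by
  refine @measurable_pi_lambda α ℕ (fun _ => G) m _ f fun i =>
    @measurable_to_countable G α _ _ m _ fun a => ?_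
  have : (fun a' => f a' i) ⁻¹' {f a i} = {a' | f a' i = f a i} := by ext a'; simp
  rw [this]; exact h i _

lemma pi_eq_gen : (inferInstance : MeasurableSpace (ℕ → G)) =
    MeasurableSpace.generateFrom (CylSets (G := G)) := by
  refine le_antisymm (fun S hS => ?_) (MeasurableSpace.generateFrom_le ?_)
  · refine measurable_of_coords _ id (fun i c => ?_) hS
    have : {a : ℕ → G | id a i = c} = {ω : ℕ → G | ω i = c} := rfl
    rw [this, coord_eq_union_cyl (le_refl i) c]
    exact MeasurableSet.iUnion fun v =>
      MeasurableSpace.measurableSet_generateFrom ⟨i, _, rfl⟩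
  · rintro S ⟨N, u, rfl⟩
    exact measSet_cyl N u

/-- the π-system of rectangles of equal-level cylinders (level at least `L`) on pair space -/
def PairCylSets (L : ℕ) : Set (Set ((ℕ → G) × (ℕ → G))) :=
  {S | ∃ N, L ≤ N ∧ ∃ u v, S = Cyl N u ×ˢ Cyl N v}

lemma isPiSystem_pairCylSets (L : ℕ) : IsPiSystem (PairCylSets (G := G) L) := by
  rintro S ⟨N, hN, u, v, rfl⟩ T ⟨M, hM, u', v', rfl⟩ hne
  rw [Set.prod_inter_prod] at hne ⊢
  obtain ⟨⟨a, b⟩, hab⟩ := hne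
  rw [Set.mem_prod] at hab
  rcases le_total N M with h | h
  · rw [cyl_inter_of_le h ⟨a, hab.1⟩, cyl_inter_of_le h ⟨b, hab.2⟩]
    exact ⟨M, hM, u', v', rfl⟩
  · rw [Set.inter_comm (Cyl N u), Set.inter_comm (Cyl N v)] at *
    rw [cyl_inter_of_le h ⟨a, hab.1⟩, cyl_inter_of_le h ⟨b, hab.2⟩]
    exact ⟨N, hN, u, v, rfl⟩

lemma pair_coord_fst_gen (L : ℕ) (i : ℕ) (c : G) :
    MeasurableSet[MeasurableSpace.generateFrom (PairCylSets (G := G) L)]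
      {w : (ℕ → G) × (ℕ → G) | w.1 i = c} := by
  have hiN : i ≤ max i L := le_max_left _ _
  have : {w : (ℕ → G) × (ℕ → G) | w.1 i = c} =
      ⋃ p : {v : Fin (max i L + 1) → G // v ⟨i, by omega⟩ = c} × (Fin (max i L + 1) → G),
        Cyl (max i L) (vext c _ p.1.1) ×ˢ Cyl (max i L) (vext c _ p.2) := by
    ext w
    simp only [Set.mem_setOf_eq, Set.mem_iUnion, Set.mem_prod]
    constructor
    · intro hc
      exact ⟨⟨⟨fun k => w.1 k, hc⟩, fun k => w.2 k⟩, mem_cyl_vext, mem_cyl_vext⟩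
    · rintro ⟨⟨⟨v, hv⟩, v'⟩, h1, h2⟩
      rw [h1 i hiN, vext_apply _ hiN]; exact hv
  rw [this]
  exact MeasurableSet.iUnion fun p =>
    MeasurableSpace.measurableSet_generateFrom ⟨max i L, le_max_right _ _, _, _, rfl⟩

lemma pair_coord_snd_gen (L : ℕ) (i : ℕ) (c : G) :
    MeasurableSet[MeasurableSpace.generateFrom (PairCylSets (G := G) L)]
      {w : (ℕ → G) × (ℕ → G) | w.2 i = c} := by
  have hiN : i ≤ max i L := le_max_left _ _
  have : {w : (ℕ → G) × (ℕ → G) | w.2 i = c} =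
      ⋃ p : (Fin (max i L + 1) → G) × {v : Fin (max i L + 1) → G // v ⟨i, by omega⟩ = c},
        Cyl (max i L) (vext c _ p.1) ×ˢ Cyl (max i L) (vext c _ p.2.1) := by
    ext w
    simp only [Set.mem_setOf_eq, Set.mem_iUnion, Set.mem_prod]
    constructor
    · intro hc
      exact ⟨⟨fun k => w.1 k, ⟨fun k => w.2 k, hc⟩⟩, mem_cyl_vext, mem_cyl_vext⟩
    · rintro ⟨⟨v', ⟨v, hv⟩⟩, h1, h2⟩
      rw [h2 i hiN, vext_apply _ hiN]; exact hv
  rw [this]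
  exact MeasurableSet.iUnion fun p =>
    MeasurableSpace.measurableSet_generateFrom ⟨max i L, le_max_right _ _, _, _, rfl⟩

lemma pair_eq_gen (L : ℕ) : (inferInstance : MeasurableSpace ((ℕ → G) × (ℕ → G))) =
    MeasurableSpace.generateFrom (PairCylSets (G := G) L) := by
  refine le_antisymm (fun S hS => ?_) (MeasurableSpace.generateFrom_le ?_)
  · set m := MeasurableSpace.generateFrom (PairCylSets (G := G) L)
    have h1 := measurable_of_coords m (fun w : (ℕ → G) × (ℕ → G) => w.1)
      (fun i c => pair_coord_fst_gen L i c)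
    have h2 := measurable_of_coords m (fun w : (ℕ → G) × (ℕ → G) => w.2)
      (fun i c => pair_coord_snd_gen L i c)
    exact (@Measurable.prod _ _ _ m _ _ id h1 h2) hS
  · rintro S ⟨N, hN, u, v, rfl⟩
    exact (measSet_cyl N u).prod (measSet_cyl N v)

/-- the π-system of triple rectangles of equal-level cylinders -/
def TripleCylSets : Set (Set ((ℕ → G) × ((ℕ → G) × (ℕ → G)))) :=
  {S | ∃ N u v t, S = Cyl N u ×ˢ (Cyl N v ×ˢ Cyl N t)}

lemma isPiSystem_tripleCylSets : IsPiSystem (TripleCylSets (G := G)) := by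
  rintro S ⟨N, u, v, t, rfl⟩ T ⟨M, u', v', t', rfl⟩ hne
  rw [Set.prod_inter_prod, Set.prod_inter_prod] at hne ⊢
  obtain ⟨⟨a, b, e⟩, hab⟩ := hne
  simp only [Set.mem_prod] at hab
  rcases le_total N M with h | h
  · rw [cyl_inter_of_le h ⟨a, hab.1⟩, cyl_inter_of_le h ⟨b, hab.2.1⟩,
      cyl_inter_of_le h ⟨e, hab.2.2⟩]
    exact ⟨M, u', v', t', rfl⟩
  · rw [Set.inter_comm (Cyl N u), Set.inter_comm (Cyl N v), Set.inter_comm (Cyl N t)] at *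
    rw [cyl_inter_of_le h ⟨a, hab.1⟩, cyl_inter_of_le h ⟨b, hab.2.1⟩,
      cyl_inter_of_le h ⟨e, hab.2.2⟩]
    exact ⟨N, u, v, t, rfl⟩

lemma triple_coord1_gen (i : ℕ) (c : G) :
    MeasurableSet[MeasurableSpace.generateFrom (TripleCylSets (G := G))]
      {w : (ℕ → G) × ((ℕ → G) × (ℕ → G)) | w.1 i = c} := by
  have hiN : i ≤ i := le_refl i
  have : {w : (ℕ → G) × ((ℕ → G) × (ℕ → G)) | w.1 i = c} =
      ⋃ p : {v : Fin (i + 1) → G // v ⟨i, by omega⟩ = c} ×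
          ((Fin (i + 1) → G) × (Fin (i + 1) → G)),
        Cyl i (vext c i p.1.1) ×ˢ (Cyl i (vext c i p.2.1) ×ˢ Cyl i (vext c i p.2.2)) := by
    ext w
    simp only [Set.mem_setOf_eq, Set.mem_iUnion, Set.mem_prod]
    constructor
    · intro hc
      exact ⟨⟨⟨fun k => w.1 k, hc⟩, fun k => w.2.1 k, fun k => w.2.2 k⟩,
        mem_cyl_vext, mem_cyl_vext, mem_cyl_vext⟩
    · rintro ⟨⟨⟨v, hv⟩, p2⟩, h1, h2, h3⟩
      rw [h1 i hiN, vext_apply _ hiN]; exact hv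
  rw [this]
  exact MeasurableSet.iUnion fun p =>
    MeasurableSpace.measurableSet_generateFrom ⟨i, _, _, _, rfl⟩

lemma triple_coord2_gen (i : ℕ) (c : G) :
    MeasurableSet[MeasurableSpace.generateFrom (TripleCylSets (G := G))]
      {w : (ℕ → G) × ((ℕ → G) × (ℕ → G)) | w.2.1 i = c} := by
  have hiN : i ≤ i := le_refl i
  have : {w : (ℕ → G) × ((ℕ → G) × (ℕ → G)) | w.2.1 i = c} =
      ⋃ p : (Fin (i + 1) → G) ×
          ({v : Fin (i + 1) → G // v ⟨i, by omega⟩ = c} × (Fin (i + 1) → G)),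
        Cyl i (vext c i p.1) ×ˢ (Cyl i (vext c i p.2.1.1) ×ˢ Cyl i (vext c i p.2.2)) := by
    ext w
    simp only [Set.mem_setOf_eq, Set.mem_iUnion, Set.mem_prod]
    constructor
    · intro hc
      exact ⟨⟨fun k => w.1 k, ⟨fun k => w.2.1 k, hc⟩, fun k => w.2.2 k⟩,
        mem_cyl_vext, mem_cyl_vext, mem_cyl_vext⟩
    · rintro ⟨⟨p1, ⟨v, hv⟩, p3⟩, h1, h2, h3⟩
      rw [h2 i hiN, vext_apply _ hiN]; exact hv
  rw [this]
  exact MeasurableSet.iUnion fun p =>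
    MeasurableSpace.measurableSet_generateFrom ⟨i, _, _, _, rfl⟩

lemma triple_coord3_gen (i : ℕ) (c : G) :
    MeasurableSet[MeasurableSpace.generateFrom (TripleCylSets (G := G))]
      {w : (ℕ → G) × ((ℕ → G) × (ℕ → G)) | w.2.2 i = c} := by
  have hiN : i ≤ i := le_refl i
  have : {w : (ℕ → G) × ((ℕ → G) × (ℕ → G)) | w.2.2 i = c} =
      ⋃ p : (Fin (i + 1) → G) ×
          ((Fin (i + 1) → G) × {v : Fin (i + 1) → G // v ⟨i, by omega⟩ = c}),
        Cyl i (vext c i p.1) ×ˢ (Cyl i (vext c i p.2.1) ×ˢ Cyl i (vext c i p.2.2.1)) := by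
    ext w
    simp only [Set.mem_setOf_eq, Set.mem_iUnion, Set.mem_prod]
    constructor
    · intro hc
      exact ⟨⟨fun k => w.1 k, fun k => w.2.1 k, ⟨fun k => w.2.2 k, hc⟩⟩,
        mem_cyl_vext, mem_cyl_vext, mem_cyl_vext⟩
    · rintro ⟨⟨p1, p2, ⟨v, hv⟩⟩, h1, h2, h3⟩
      rw [h3 i hiN, vext_apply _ hiN]; exact hv
  rw [this]
  exact MeasurableSet.iUnion fun p =>
    MeasurableSpace.measurableSet_generateFrom ⟨i, _, _, _, rfl⟩

lemma triple_eq_gen : (inferInstance : MeasurableSpace ((ℕ → G) × ((ℕ → G) × (ℕ → G)))) =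
    MeasurableSpace.generateFrom (TripleCylSets (G := G)) := by
  refine le_antisymm (fun S hS => ?_) (MeasurableSpace.generateFrom_le ?_)
  · set m := MeasurableSpace.generateFrom (TripleCylSets (G := G))
    have h1 := measurable_of_coords m (fun w : (ℕ → G) × ((ℕ → G) × (ℕ → G)) => w.1)
      (fun i c => triple_coord1_gen i c)
    have h2 := measurable_of_coords m (fun w : (ℕ → G) × ((ℕ → G) × (ℕ → G)) => w.2.1)
      (fun i c => triple_coord2_gen i c)
    have h3 := measurable_of_coords m (fun w : (ℕ → G) × ((ℕ → G) × (ℕ → G)) => w.2.2)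
      (fun i c => triple_coord3_gen i c)
    exact (@Measurable.prod _ _ _ m _ _ id h1 (@Measurable.prod _ _ _ m _ _ _ h2 h3)) hS
  · rintro S ⟨N, u, v, t, rfl⟩
    exact (measSet_cyl N u).prod ((measSet_cyl N v).prod (measSet_cyl N t))

end Gen

section Markov

variable [Countable G] [MeasurableSpace G] [MeasurableSingletonClass G]
variable {K : G → Measure G} (hK : ∀ x, IsProbabilityMeasure (K x))
variable {P : G → Measure (ℕ → G)} [∀ x, IsProbabilityMeasure (P x)]
  (hP : ∀ x, IsPathLaw K x (P x))

/-- the shift map on path space -/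
def shift : (ℕ → G) → (ℕ → G) := fun ω i => ω (i + 1)

lemma measurable_shift : Measurable (shift (G := G)) :=
  measurable_pi_lambda _ fun i => measurable_pi_apply (i + 1)

/-- prepending a point to a path -/
def consP (a : G) (u : ℕ → G) : ℕ → G := fun k => if k = 0 then a else u (k - 1)

lemma shift_preimage_cyl (N : ℕ) (u : ℕ → G) :
    shift ⁻¹' Cyl N u = ⋃ a : G, Cyl (N + 1) (consP a u) := by
  ext ω
  simp only [Set.mem_preimage, Set.mem_iUnion]
  constructor
  · intro h
    refine ⟨ω 0, fun i hi => ?_⟩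
    rcases Nat.eq_zero_or_pos i with h0 | h0
    · subst h0; simp [consP]
    · obtain ⟨j, rfl⟩ : ∃ j, i = j + 1 := ⟨i - 1, by omega⟩
      have := h j (by omega)
      simpa [consP, shift] using this
  · rintro ⟨a, h⟩
    intro i hi
    have := h (i + 1) (by omega)
    simpa [consP, shift] using this

include hK hP in
lemma map_shift_eq (z : G) :
    (P z).map shift = Measure.sum (fun a => K z {a} • P a) := by
  haveI : IsProbabilityMeasure ((P z).map shift) :=
    Measure.isProbabilityMeasure_map (measurable_shift (G := G)).aemeasurable
  refine ext_of_generate_finite CylSets pi_eq_gen isPiSystem_cylSets ?_ ?_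
  · rintro S ⟨N, u, rfl⟩
    rw [Measure.map_apply measurable_shift (measSet_cyl N u), shift_preimage_cyl,
      measure_iUnion ?hdisj (fun a => measSet_cyl _ _)]
    case hdisj =>
      intro a b hab
      refine Set.disjoint_left.mpr fun ω h1 h2 => hab ?_
      have e1 := h1 0 (by omega)
      have e2 := h2 0 (by omega)
      simp only [consP, reduceIte] at e1 e2
      rw [← e1, ← e2]
    have hL : ∀ a : G, P a (Cyl (N + 1) (consP a u)) = cylP K a (consP a u) (N + 1) :=
      fun a => prob_cyl hP a _ _
    calc ∑' a : G, P z (Cyl (N + 1) (consP a u))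
        = ∑' a : G, cylP K z (consP a u) (N + 1) := by
          congr 1; ext a; exact prob_cyl hP z _ _
      _ = cylP K z (consP z u) (N + 1) := by
          refine tsum_eq_single z fun a ha => ?_
          unfold cylP
          rw [if_neg]
          simp only [consP, if_pos rfl]
          exact ha
      _ = K z {u 0} * pathP K u N := by
          unfold cylP
          rw [if_pos (by simp [consP])]
          unfold pathP
          rw [Finset.prod_range_succ']
          have h0 : K (consP z u 0) {consP z u (0 + 1)} = K z {u 0} := by
            simp [consP]
          have hk : ∀ k, K (consP z u (k + 1)) {consP z u (k + 1 + 1)} =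
              K (u k) {u (k + 1)} := by
            intro k; simp [consP]
          rw [h0]
          rw [Finset.prod_congr rfl (fun k _ => hk k)]
          ring
      _ = (Measure.sum (fun a => K z {a} • P a)) (Cyl N u) := by
          rw [Measure.sum_apply _ (measSet_cyl N u)]
          have : ∀ a : G, (K z {a} • P a) (Cyl N u) = K z {a} * cylP K a u N := by
            intro a
            rw [Measure.smul_apply, smul_eq_mul, prob_cyl hP]
          rw [tsum_congr this]
          rw [tsum_eq_single (u 0) ?_]
          · unfold cylP
            rw [if_pos rfl]
          · intro a ha
            unfold cylP
            rw [if_neg (fun h => ha h.symm), mul_zero]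
  · rw [Measure.map_apply measurable_shift MeasurableSet.univ]
    simp only [Set.preimage_univ]
    rw [Measure.sum_apply _ MeasurableSet.univ]
    have : ∀ a : G, (K z {a} • P a) Set.univ = K z {a} := by
      intro a
      rw [Measure.smul_apply, smul_eq_mul, measure_univ, mul_one]
    rw [tsum_congr this, ← meas_univ_eq_tsum, measure_univ, measure_univ]

include hK hP in
lemma P_shift_apply (z : G) {S : Set (ℕ → G)} (hS : MeasurableSet S) :
    P z (shift ⁻¹' S) = ∑' a : G, K z {a} * P a S := by
  rw [← Measure.map_apply measurable_shift hS, map_shift_eq hK hP,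
    Measure.sum_apply _ hS]
  exact tsum_congr fun a => by rw [Measure.smul_apply, smul_eq_mul]

include hK hP in
lemma P_coord (M : ℕ) (z b : G) : P z {ω | ω M = b} = nStep K M z {b} := by
  induction M generalizing z with
  | zero =>
    show P z {ω | ω 0 = b} = Measure.dirac z {b}
    rw [Measure.dirac_apply' z (measSet_all _)]
    by_cases hb : b = z
    · subst hb
      rw [prob_zero_coord hP]
      simp
    · have hsub : {ω : ℕ → G | ω 0 = b} ⊆ {ω : ℕ → G | ω 0 = z}ᶜ := by
        intro ω hω hc
        exact hb (hω.symm.trans hc)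
      have : P z {ω : ℕ → G | ω 0 = b} = 0 := by
        refine measure_mono_null hsub ?_
        rw [measure_compl (measSet_eqG (measurable_pi_apply 0) measurable_const)
          (measure_ne_top _ _), prob_zero_coord hP]
        simp
      rw [this, Set.indicator_of_notMem (fun h => hb (Set.mem_singleton_iff.mp h).symm)]
  | succ M ih =>
    have hpre : {ω : ℕ → G | ω (M + 1) = b} = shift ⁻¹' {ω : ℕ → G | ω M = b} := rfl
    rw [hpre, P_shift_apply hK hP z (measSet_eqG (measurable_pi_apply M) measurable_const)]
    show _ = (Measure.sum fun a => K z {a} • nStep K M a) {b}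
    rw [Measure.sum_apply _ (measSet_all _)]
    exact tsum_congr fun a => by rw [Measure.smul_apply, smul_eq_mul, ih a]

include hK hP in
lemma P_no_revisit (hcf : CycleFree K) (z : G) (i s : ℕ) :
    P z {ω | ω i = ω (i + s + 1)} = 0 := by
  induction i generalizing z with
  | zero =>
    set F := {ω : ℕ → G | ω 0 = z} with hF
    have hFm : MeasurableSet F := measSet_eqG (measurable_pi_apply 0) measurable_const
    have hFc : P z Fᶜ = 0 := by
      rw [measure_compl hFm (measure_ne_top _ _), prob_zero_coord hP]; simp
    have hsub : {ω : ℕ → G | ω 0 = ω (0 + s + 1)} ⊆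
        ({ω : ℕ → G | ω (s + 1) = z} ∪ Fᶜ) := by
      intro ω hω
      by_cases h0 : ω 0 = z
      · left
        show ω (s + 1) = z
        have : ω 0 = ω (s + 1) := by simpa using hω
        rw [← this, h0]
      · right; exact h0
    refine le_antisymm ?_ (zero_le)
    calc P z {ω | ω 0 = ω (0 + s + 1)} ≤ P z ({ω : ℕ → G | ω (s + 1) = z} ∪ Fᶜ) :=
          measure_mono hsub
      _ ≤ P z {ω : ℕ → G | ω (s + 1) = z} + P z Fᶜ := measure_union_le _ _
      _ = 0 := by
          rw [hFc, P_coord hK hP (s + 1) z z, hcf z (s + 1) (by omega)]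
          simp
  | succ i ih =>
    rw [show i + 1 + s + 1 = i + s + 1 + 1 from by omega]
    have hpre : {ω : ℕ → G | ω (i + 1) = ω (i + s + 1 + 1)} =
        shift ⁻¹' {ω : ℕ → G | ω i = ω (i + s + 1)} := rfl
    rw [hpre, P_shift_apply hK hP z
      (measSet_eqG (measurable_pi_apply i) (measurable_pi_apply (i + s + 1)))]
    simp [ih]

include hK hP in
lemma P_revisit_null (hcf : CycleFree K) (z : G) :
    P z {ω | ∃ i j, i < j ∧ ω i = ω j} = 0 := by
  have hsub : {ω : ℕ → G | ∃ i j, i < j ∧ ω i = ω j} ⊆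
      ⋃ p : ℕ × ℕ, {ω : ℕ → G | ω p.1 = ω (p.1 + p.2 + 1)} := by
    rintro ω ⟨i, j, hij, he⟩
    refine Set.mem_iUnion.mpr ⟨(i, j - i - 1), ?_⟩
    show ω i = ω (i + (j - i - 1) + 1)
    rw [show i + (j - i - 1) + 1 = j by omega]
    exact he
  refine le_antisymm ?_ (zero_le)
  calc P z {ω | ∃ i j, i < j ∧ ω i = ω j}
      ≤ ∑' p : ℕ × ℕ, P z {ω | ω p.1 = ω (p.1 + p.2 + 1)} :=
        le_trans (measure_mono hsub) (measure_iUnion_le _)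
    _ = 0 := by simp [P_no_revisit hK hP hcf z]

end Markov

section Swap

variable [Countable G] [MeasurableSpace G] [MeasurableSingletonClass G]

/-- splice of two paths: follow `u` up to time `m`, then the tail of `t` after time `n` -/
def spl (u t : ℕ → G) (m n : ℕ) : ℕ → G := fun i => if i ≤ m then u i else t (n + i - m)

lemma spl_le {u t : ℕ → G} {m n i : ℕ} (h : i ≤ m) : spl u t m n i = u i := if_pos h

lemma spl_gt {u t : ℕ → G} {m n i : ℕ} (h : m < i) : spl u t m n i = t (n + i - m) :=
  if_neg (by omega)

/-- the tail-swap map on pair path space -/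
def pswap (m n : ℕ) : (ℕ → G) × (ℕ → G) → (ℕ → G) × (ℕ → G) :=
  fun w => (spl w.1 w.2 m n, spl w.2 w.1 n m)

lemma measc1 (i : ℕ) : Measurable fun w : (ℕ → G) × (ℕ → G) => w.1 i :=
  (measurable_pi_apply i).comp measurable_fst

lemma measc2 (i : ℕ) : Measurable fun w : (ℕ → G) × (ℕ → G) => w.2 i :=
  (measurable_pi_apply i).comp measurable_snd

lemma measurable_pswap (m n : ℕ) : Measurable (pswap (G := G) m n) := by
  apply Measurable.prod
  · refine measurable_pi_lambda _ fun i => ?_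
    by_cases h : i ≤ m
    · have he : (fun c : (ℕ → G) × (ℕ → G) => (pswap m n c).1 i) = fun c => c.1 i := by
        funext c; exact spl_le h
      rw [he]; exact measc1 i
    · have he : (fun c : (ℕ → G) × (ℕ → G) => (pswap m n c).1 i) =
          fun c => c.2 (n + i - m) := by
        funext c; exact spl_gt (by omega)
      rw [he]; exact measc2 _
  · refine measurable_pi_lambda _ fun i => ?_
    by_cases h : i ≤ n
    · have he : (fun c : (ℕ → G) × (ℕ → G) => (pswap m n c).2 i) = fun c => c.2 i := by
        funext c; exact spl_le h
      rw [he]; exact measc2 i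
    · have he : (fun c : (ℕ → G) × (ℕ → G) => (pswap m n c).2 i) =
          fun c => c.1 (m + i - n) := by
        funext c; exact spl_gt (by omega)
      rw [he]; exact measc1 _

lemma spl_spl {α β : ℕ → G} {m n : ℕ} :
    spl (spl α β m n) (spl β α n m) m n = α := by
  funext i
  by_cases h : i ≤ m
  · rw [spl_le h, spl_le h]
  · push_neg at h
    rw [spl_gt h, spl_gt (show n < n + i - m by omega)]
    have : m + (n + i - m) - n = i := by omega
    rw [this]

lemma pswap_invol {m n : ℕ} (w : (ℕ → G) × (ℕ → G)) :
    pswap m n (pswap m n w) = w := by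
  obtain ⟨α, β⟩ := w
  unfold pswap
  simp only [Prod.mk.injEq]
  exact ⟨spl_spl, spl_spl⟩

lemma pswap_preimage_D {m n : ℕ} :
    pswap (G := G) m n ⁻¹' {w | w.1 m = w.2 n} = {w | w.1 m = w.2 n} := by
  ext ⟨α, β⟩
  simp only [Set.mem_preimage, Set.mem_setOf_eq, pswap]
  rw [spl_le (le_refl m), spl_le (le_refl n)]

lemma pswap_preimage_rect {m n N : ℕ} (hmN : m ≤ N) (hnN : n ≤ N) (u t : ℕ → G) :
    pswap (G := G) m n ⁻¹' (Cyl N u ×ˢ Cyl N t) =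
      Cyl (m + (N - n)) (spl u t m n) ×ˢ Cyl (n + (N - m)) (spl t u n m) := by
  ext ⟨α, β⟩
  simp only [Set.mem_preimage, Set.mem_prod, pswap]
  constructor
  · rintro ⟨h1, h2⟩
    constructor
    · intro i hi
      by_cases h : i ≤ m
      · rw [spl_le h]
        have := h1 i (le_trans h hmN)
        rwa [spl_le h] at this
      · push_neg at h
        rw [spl_gt h]
        have hj : n + i - m ≤ N := by omega
        have := h2 (n + i - m) hj
        rwa [spl_gt (show n < n + i - m by omega),
          show m + (n + i - m) - n = i from by omega] at this
    · intro j hj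
      by_cases h : j ≤ n
      · rw [spl_le h]
        have := h2 j (le_trans h hnN)
        rwa [spl_le h] at this
      · push_neg at h
        rw [spl_gt h]
        have hi : m + j - n ≤ N := by omega
        have := h1 (m + j - n) hi
        rwa [spl_gt (show m < m + j - n by omega),
          show n + (m + j - n) - m = j from by omega] at this
  · rintro ⟨h1, h2⟩
    constructor
    · intro i hi
      by_cases h : i ≤ m
      · rw [spl_le h]
        have := h1 i (by omega)
        rw [this, spl_le h]
      · push_neg at h
        rw [spl_gt h]
        have := h2 (n + i - m) (by omega)
        rw [this, spl_gt (show n < n + i - m by omega),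
          show m + (n + i - m) - n = i from by omega]
    · intro j hj
      by_cases h : j ≤ n
      · rw [spl_le h]
        have := h2 j (by omega)
        rw [this, spl_le h]
      · push_neg at h
        rw [spl_gt h]
        have := h1 (m + j - n) (by omega)
        rw [this, spl_gt (show m < m + j - n by omega),
          show n + (m + j - n) - m = j from by omega]

variable {K : G → Measure G}

lemma pathP_spl {m n N : ℕ} (hmN : m ≤ N) (hnN : n ≤ N) {u t : ℕ → G}
    (hkey : u m = t n) :
    pathP K (spl u t m n) (m + (N - n)) =
      (∏ k ∈ Finset.range m, K (u k) {u (k + 1)}) *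
        ∏ k ∈ Finset.Ico n N, K (t k) {t (k + 1)} := by
  unfold pathP
  rw [Finset.prod_range_add]
  congr 1
  · refine Finset.prod_congr rfl fun k hk => ?_
    rw [Finset.mem_range] at hk
    rw [spl_le (by omega), spl_le (by omega)]
  · rw [Finset.prod_Ico_eq_prod_range]
    refine Finset.prod_congr rfl fun k hk => ?_
    have hs1 : spl u t m n (m + k) = t (n + k) := by
      rcases Nat.eq_zero_or_pos k with h0 | h0
      · subst h0
        rw [spl_le (by omega)]
        simpa using hkey
      · rw [spl_gt (by omega), show n + (m + k) - m = n + k from by omega]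
    have hs2 : spl u t m n (m + k + 1) = t (n + k + 1) := by
      rw [spl_gt (by omega), show n + (m + k + 1) - m = n + k + 1 from by omega]
    rw [hs1, hs2]

lemma cylP_spl_mul {m n N : ℕ} (hmN : m ≤ N) (hnN : n ≤ N) {u t : ℕ → G}
    (hkey : u m = t n) (z1 z2 : G) :
    cylP K z1 (spl u t m n) (m + (N - n)) * cylP K z2 (spl t u n m) (n + (N - m)) =
      cylP K z1 u N * cylP K z2 t N := by
  classical
  unfold cylP
  rw [show spl u t m n 0 = u 0 from spl_le (Nat.zero_le m),
    show spl t u n m 0 = t 0 from spl_le (Nat.zero_le n)]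
  by_cases h1 : u 0 = z1 <;> by_cases h2 : t 0 = z2 <;>
    simp only [h1, h2, if_pos, if_neg, if_true, if_false, zero_mul, mul_zero]
  rw [pathP_spl hmN hnN hkey, pathP_spl hnN hmN hkey.symm]
  have hu : pathP K u N =
      (∏ k ∈ Finset.range m, K (u k) {u (k + 1)}) *
        ∏ k ∈ Finset.Ico m N, K (u k) {u (k + 1)} := by
    unfold pathP
    rw [Finset.range_eq_Ico, ← Finset.prod_Ico_consecutive _ (Nat.zero_le m) hmN]
    rw [Finset.range_eq_Ico]
  have ht : pathP K t N =
      (∏ k ∈ Finset.range n, K (t k) {t (k + 1)}) *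
        ∏ k ∈ Finset.Ico n N, K (t k) {t (k + 1)} := by
    unfold pathP
    rw [Finset.range_eq_Ico, ← Finset.prod_Ico_consecutive _ (Nat.zero_le n) hnN]
    rw [Finset.range_eq_Ico]
  rw [hu, ht]
  ring

variable {P : G → Measure (ℕ → G)} [∀ x, IsProbabilityMeasure (P x)]
  (hP : ∀ x, IsPathLaw K x (P x))

include hP in
/-- Key lemma: the tail swap at a meeting point preserves the two-chain law. -/
lemma pswap_measure (z1 z2 : G) (m n : ℕ) {S : Set ((ℕ → G) × (ℕ → G))}
    (hS : MeasurableSet S) (hsub : S ⊆ {w | w.1 m = w.2 n}) :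
    ((P z1).prod (P z2)) (pswap m n ⁻¹' S) = ((P z1).prod (P z2)) S := by
  classical
  set μ := (P z1).prod (P z2) with hμ
  set D : Set ((ℕ → G) × (ℕ → G)) := {w | w.1 m = w.2 n} with hD
  have hDm : MeasurableSet D := measSet_eqG (measc1 m) (measc2 n)
  have hpD : pswap m n ⁻¹' D = D := pswap_preimage_D
  have hmem : ∀ {N : ℕ} (hmN : m ≤ N) (hnN : n ≤ N) (u t : ℕ → G),
      u m = t n → Cyl N u ×ˢ Cyl N t ⊆ D := by
    intro N hmN hnN u t hk w hw
    show w.1 m = w.2 n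
    rw [hw.1 m hmN, hw.2 n hnN, hk]
  have hext : ((μ.map (pswap m n)).restrict D) = μ.restrict D := by
    haveI : IsProbabilityMeasure (μ.map (pswap m n)) :=
      Measure.isProbabilityMeasure_map (measurable_pswap m n).aemeasurable
    refine ext_of_generate_finite (PairCylSets (max m n)) (pair_eq_gen _)
      (isPiSystem_pairCylSets _) ?_ ?_
    · rintro S' ⟨N, hLN, u, t, rfl⟩
      have hmN : m ≤ N := le_trans (le_max_left _ _) hLN
      have hnN : n ≤ N := le_trans (le_max_right _ _) hLN
      have hS'm : MeasurableSet (Cyl N u ×ˢ Cyl N t) :=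
        (measSet_cyl N u).prod (measSet_cyl N t)
      rw [Measure.restrict_apply hS'm, Measure.restrict_apply hS'm,
        Measure.map_apply (measurable_pswap m n) (hS'm.inter hDm),
        Set.preimage_inter, hpD]
      by_cases hkey : u m = t n
      · have e1 : Cyl N u ×ˢ Cyl N t ∩ D = Cyl N u ×ˢ Cyl N t :=
          Set.inter_eq_left.mpr (hmem hmN hnN u t hkey)
        have e2 : pswap m n ⁻¹' (Cyl N u ×ˢ Cyl N t) ∩ D =
            pswap m n ⁻¹' (Cyl N u ×ˢ Cyl N t) := by
          refine Set.inter_eq_left.mpr fun w hw => ?_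
          have h' : pswap m n w ∈ D := hmem hmN hnN u t hkey hw
          have h'' : (pswap m n w).1 m = (pswap m n w).2 n := h'
          show w.1 m = w.2 n
          rwa [show (pswap m n w).1 m = w.1 m from spl_le (le_refl m),
            show (pswap m n w).2 n = w.2 n from spl_le (le_refl n)] at h''
        rw [e1, e2, pswap_preimage_rect hmN hnN u t, hμ, Measure.prod_prod,
          Measure.prod_prod, prob_cyl hP, prob_cyl hP, prob_cyl hP, prob_cyl hP,
          cylP_spl_mul hmN hnN hkey]
      · have e1 : Cyl N u ×ˢ Cyl N t ∩ D = ∅ := by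
          refine Set.eq_empty_iff_forall_notMem.mpr fun w hw => ?_
          have h' : w.1 m = w.2 n := hw.2
          rw [hw.1.1 m hmN, hw.1.2 n hnN] at h'
          exact hkey h'
        have e2 : pswap m n ⁻¹' (Cyl N u ×ˢ Cyl N t) ∩ D = ∅ := by
          refine Set.eq_empty_iff_forall_notMem.mpr fun w hw => ?_
          obtain ⟨hw1, hw2⟩ := hw
          have hα : w.1 m = u m := by
            have := hw1.1 m hmN
            rwa [show (pswap m n w).1 m = w.1 m from spl_le (le_refl m)] at this
          have hβ : w.2 n = t n := by
            have := hw1.2 n hnN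
            rwa [show (pswap m n w).2 n = w.2 n from spl_le (le_refl n)] at this
          have h' : w.1 m = w.2 n := hw2
          rw [hα, hβ] at h'
          exact hkey h'
        rw [e1, e2]
    · rw [Measure.restrict_apply_univ, Measure.restrict_apply_univ,
        Measure.map_apply (measurable_pswap m n) hDm, hpD]
  have hSD : S ∩ D = S := Set.inter_eq_left.mpr hsub
  have h1 : ((μ.map (pswap m n)).restrict D) S = μ (pswap m n ⁻¹' S) := by
    rw [Measure.restrict_apply hS, hSD,
      Measure.map_apply (measurable_pswap m n) hS]
  have h2 : (μ.restrict D) S = μ S := by rw [Measure.restrict_apply hS, hSD]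
  rw [← h1, hext, h2]

end Swap

section Triple

variable [Countable G] [MeasurableSpace G] [MeasurableSingletonClass G]

lemma mc1 (i : ℕ) : Measurable fun w : (ℕ → G) × ((ℕ → G) × (ℕ → G)) => w.1 i :=
  (measurable_pi_apply i).comp measurable_fst

lemma mc2 (i : ℕ) : Measurable fun w : (ℕ → G) × ((ℕ → G) × (ℕ → G)) => w.2.1 i :=
  (measurable_pi_apply i).comp (measurable_fst.comp measurable_snd)

lemma mc3 (i : ℕ) : Measurable fun w : (ℕ → G) × ((ℕ → G) × (ℕ → G)) => w.2.2 i :=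
  (measurable_pi_apply i).comp (measurable_snd.comp measurable_snd)

/-- the rearrangement swapping the first two of three coordinates -/
def rho : (ℕ → G) × ((ℕ → G) × (ℕ → G)) → (ℕ → G) × ((ℕ → G) × (ℕ → G)) :=
  fun w => (w.2.1, (w.1, w.2.2))

lemma measurable_rho : Measurable (rho (G := G)) := by
  apply Measurable.prod
  · show Measurable fun w : (ℕ → G) × ((ℕ → G) × (ℕ → G)) => w.2.1
    exact measurable_fst.comp measurable_snd
  · apply Measurable.prod
    · show Measurable fun w : (ℕ → G) × ((ℕ → G) × (ℕ → G)) => w.1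
      exact measurable_fst
    · show Measurable fun w : (ℕ → G) × ((ℕ → G) × (ℕ → G)) => w.2.2
      exact measurable_snd.comp measurable_snd

lemma measurable_idpswap (m n : ℕ) :
    Measurable (Prod.map (id : (ℕ → G) → (ℕ → G)) (pswap (G := G) m n)) :=
  measurable_id.prodMap (measurable_pswap m n)

variable {K : G → Measure G}
variable {P : G → Measure (ℕ → G)} [∀ x, IsProbabilityMeasure (P x)]
  (hP : ∀ x, IsPathLaw K x (P x))

lemma map_rho (z1 z2 z3 : G) :
    ((P z1).prod ((P z2).prod (P z3))).map rho = (P z2).prod ((P z1).prod (P z3)) := by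
  haveI : IsProbabilityMeasure (((P z1).prod ((P z2).prod (P z3))).map rho) :=
    Measure.isProbabilityMeasure_map measurable_rho.aemeasurable
  refine ext_of_generate_finite TripleCylSets triple_eq_gen isPiSystem_tripleCylSets ?_ ?_
  · rintro S ⟨N, u, v, t, rfl⟩
    have hpre : rho ⁻¹' (Cyl N u ×ˢ (Cyl N v ×ˢ Cyl N t)) =
        Cyl N v ×ˢ (Cyl N u ×ˢ Cyl N t) := by
      ext w
      simp only [Set.mem_preimage, Set.mem_prod, rho]
      tauto
    rw [Measure.map_apply measurable_rho
      ((measSet_cyl N u).prod ((measSet_cyl N v).prod (measSet_cyl N t))), hpre,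
      Measure.prod_prod, Measure.prod_prod, Measure.prod_prod, Measure.prod_prod]
    ring
  · rw [Measure.map_apply measurable_rho MeasurableSet.univ]
    simp

include hP in
lemma swap23_measure (z1 z2 z3 : G) (m n : ℕ)
    {S : Set ((ℕ → G) × ((ℕ → G) × (ℕ → G)))} (hS : MeasurableSet S)
    (hsub : S ⊆ {w | w.2.1 m = w.2.2 n}) :
    ((P z1).prod ((P z2).prod (P z3))) (Prod.map id (pswap m n) ⁻¹' S) =
      ((P z1).prod ((P z2).prod (P z3))) S := by
  have hmeas : Measurable (Prod.map id (pswap (G := G) m n)) := measurable_idpswap m n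
  rw [Measure.prod_apply (hmeas hS), Measure.prod_apply hS]
  refine lintegral_congr fun a => ?_
  have hslice : (Prod.mk a ⁻¹' (Prod.map id (pswap m n) ⁻¹' S)) =
      pswap m n ⁻¹' (Prod.mk a ⁻¹' S) := rfl
  rw [hslice]
  refine pswap_measure hP z2 z3 m n (measurable_prodMk_left hS) fun b hb => ?_
  exact hsub hb

/-- the tail swap on the first and third coordinates of triple path space -/
def swap13 (m n : ℕ) : (ℕ → G) × ((ℕ → G) × (ℕ → G)) → (ℕ → G) × ((ℕ → G) × (ℕ → G)) :=
  fun w => (spl w.1 w.2.2 m n, (w.2.1, spl w.2.2 w.1 n m))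

lemma swap13_eq (m n : ℕ) :
    swap13 (G := G) m n = rho ∘ (Prod.map id (pswap m n)) ∘ rho := rfl

lemma measurable_swap13 (m n : ℕ) : Measurable (swap13 (G := G) m n) := by
  rw [swap13_eq]
  exact measurable_rho.comp ((measurable_idpswap m n).comp
    measurable_rho)

include hP in
lemma swap13_measure (z3 : G) (x : G) (m n : ℕ)
    {S : Set ((ℕ → G) × ((ℕ → G) × (ℕ → G)))} (hS : MeasurableSet S)
    (hsub : S ⊆ {w | w.1 m = w.2.2 n}) :
    ((P x).prod ((P x).prod (P z3))) (swap13 m n ⁻¹' S) =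
      ((P x).prod ((P x).prod (P z3))) S := by
  have hmap : ((P x).prod ((P x).prod (P z3))).map rho = (P x).prod ((P x).prod (P z3)) :=
    map_rho x x z3
  have hrho_pre : ∀ {T : Set ((ℕ → G) × ((ℕ → G) × (ℕ → G)))}, MeasurableSet T →
      ((P x).prod ((P x).prod (P z3))) (rho ⁻¹' T) =
        ((P x).prod ((P x).prod (P z3))) T := by
    intro T hT
    rw [← Measure.map_apply measurable_rho hT, hmap]
  have hT1 : MeasurableSet (rho ⁻¹' S) := measurable_rho hS
  have hT1sub : rho ⁻¹' S ⊆ {w | w.2.1 m = w.2.2 n} := fun w hw => hsub hw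
  have hpre : swap13 m n ⁻¹' S = rho ⁻¹' (Prod.map id (pswap m n) ⁻¹' (rho ⁻¹' S)) := by
    rw [swap13_eq]; rfl
  rw [hpre, hrho_pre (measurable_idpswap m n hT1),
    swap23_measure hP x x z3 m n hT1 hT1sub, hrho_pre hS]

end Triple

section Events

variable [Countable G] [MeasurableSpace G] [MeasurableSingletonClass G]

/-- no collision at positive times -/
def NoCol (ω ω' : ℕ → G) : Prop := ∀ a b, 1 ≤ a → 1 ≤ b → ω a ≠ ω' b

/-- triple path space -/
abbrev W (G : Type*) := (ℕ → G) × ((ℕ → G) × (ℕ → G))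

def setA : Set (W G) := {w | NoCol w.1 w.2.1}
def setB : Set (W G) := {w | NoCol w.1 w.2.2}
def setC : Set (W G) := {w | NoCol w.2.1 w.2.2}
def Rset : Set (W G) := {w | ∀ i j, i < j → w.2.2 i ≠ w.2.2 j}

def meets1 (w : W G) (k : ℕ) : Prop := ∃ p, 1 ≤ p ∧ w.1 p = w.2.2 k
def meets2 (w : W G) (k : ℕ) : Prop := ∃ p, 1 ≤ p ∧ w.2.1 p = w.2.2 k

/-- the first meeting of the third path with the union of the two others happens at
time `n` (on the third path), is with the first path, and at first-path time `m` -/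
def FirstX (m n : ℕ) (w : W G) : Prop :=
  1 ≤ m ∧ 1 ≤ n ∧ w.1 m = w.2.2 n ∧
    (∀ k, 1 ≤ k → k < n → ¬ meets1 w k ∧ ¬ meets2 w k) ∧
    (∀ j, 1 ≤ j → j < m → w.1 j ≠ w.2.2 n)

def FirstY (m n : ℕ) (w : W G) : Prop :=
  1 ≤ m ∧ 1 ≤ n ∧ w.2.1 m = w.2.2 n ∧
    (∀ k, 1 ≤ k → k < n → ¬ meets1 w k ∧ ¬ meets2 w k) ∧
    ¬ meets1 w n ∧
    (∀ j, 1 ≤ j → j < m → w.2.1 j ≠ w.2.2 n)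

def EX (m n : ℕ) : Set (W G) := {w | w ∈ setA ∧ w ∉ setC ∧ FirstX m n w ∧ w ∈ Rset}
def EY (m n : ℕ) : Set (W G) := {w | w ∈ setA ∧ w ∉ setB ∧ FirstY m n w ∧ w ∈ Rset}
def TX (m n : ℕ) : Set (W G) := {w | w ∉ setA ∧ w ∈ setC ∧ FirstX m n w}
def TY (m n : ℕ) : Set (W G) := {w | w ∉ setA ∧ w ∈ setB ∧ FirstY m n w}

section Meas

lemma measSet_imp {α : Type*} [MeasurableSpace α] (c : Prop) {Q : Set α}
    (h : MeasurableSet Q) : MeasurableSet {a | c → a ∈ Q} := by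
  classical
  by_cases hc : c
  · have e : {a | c → a ∈ Q} = Q := by ext a; simp [hc]
    rwa [e]
  · have e : {a | c → a ∈ Q} = Set.univ := by ext a; simp [hc]
    rw [e]; exact MeasurableSet.univ

lemma measSet_and (c : Prop) {α : Type*} [MeasurableSpace α] {Q : Set α}
    (h : MeasurableSet Q) : MeasurableSet {a | c ∧ a ∈ Q} := by
  classical
  by_cases hc : c
  · have e : {a | c ∧ a ∈ Q} = Q := by ext a; simp [hc]
    rwa [e]
  · have e : {a | c ∧ a ∈ Q} = (∅ : Set α) := by ext a; simp [hc]
    rw [e]; exact MeasurableSet.empty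

lemma measSet_forall {α : Type*} [MeasurableSpace α] {Q : ℕ → Set α}
    (h : ∀ k, MeasurableSet (Q k)) : MeasurableSet {a | ∀ k, a ∈ Q k} := by
  have e : {a | ∀ k, a ∈ Q k} = ⋂ k, Q k := by ext a; simp
  rw [e]; exact MeasurableSet.iInter h

lemma measSet_forall2 {α : Type*} [MeasurableSpace α] {Q : ℕ → ℕ → Set α}
    (h : ∀ j k, MeasurableSet (Q j k)) : MeasurableSet {a | ∀ j k, a ∈ Q j k} := by
  have e : {a | ∀ j k, a ∈ Q j k} = ⋂ p : ℕ × ℕ, Q p.1 p.2 := by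
    ext a
    simp only [Set.mem_setOf_eq, Set.mem_iInter]
    exact ⟨fun hh p => hh p.1 p.2, fun hh j k => hh (j, k)⟩
  rw [e]; exact MeasurableSet.iInter fun p => h p.1 p.2

lemma measSet_noCol12 : MeasurableSet (setA (G := G)) := by
  unfold setA NoCol
  apply measSet_forall2 (Q := fun a b => {w : W G | 1 ≤ a → 1 ≤ b → w.1 a ≠ w.2.1 b})
  intro a b
  exact measSet_imp _ (measSet_imp _ (measSet_neG (mc1 a) (mc2 b)))

lemma measSet_noCol13 : MeasurableSet (setB (G := G)) := by
  unfold setB NoCol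
  apply measSet_forall2 (Q := fun a b => {w : W G | 1 ≤ a → 1 ≤ b → w.1 a ≠ w.2.2 b})
  intro a b
  exact measSet_imp _ (measSet_imp _ (measSet_neG (mc1 a) (mc3 b)))

lemma measSet_noCol23 : MeasurableSet (setC (G := G)) := by
  unfold setC NoCol
  apply measSet_forall2 (Q := fun a b => {w : W G | 1 ≤ a → 1 ≤ b → w.2.1 a ≠ w.2.2 b})
  intro a b
  exact measSet_imp _ (measSet_imp _ (measSet_neG (mc2 a) (mc3 b)))

lemma measSet_R : MeasurableSet (Rset (G := G)) := by
  unfold Rset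
  apply measSet_forall2 (Q := fun i j => {w : W G | i < j → w.2.2 i ≠ w.2.2 j})
  intro i j
  exact measSet_imp _ (measSet_neG (mc3 i) (mc3 j))

lemma measSet_meets1 (k : ℕ) : MeasurableSet {w : W G | meets1 w k} := by
  unfold meets1
  have e : {w : W G | ∃ p, 1 ≤ p ∧ w.1 p = w.2.2 k} =
      ⋃ p : ℕ, {w : W G | 1 ≤ p ∧ w.1 p = w.2.2 k} := by
    ext w; simp
  rw [e]
  exact MeasurableSet.iUnion fun p => measSet_and _ (measSet_eqG (mc1 p) (mc3 k))

lemma measSet_meets2 (k : ℕ) : MeasurableSet {w : W G | meets2 w k} := by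
  unfold meets2
  have e : {w : W G | ∃ p, 1 ≤ p ∧ w.2.1 p = w.2.2 k} =
      ⋃ p : ℕ, {w : W G | 1 ≤ p ∧ w.2.1 p = w.2.2 k} := by
    ext w; simp
  rw [e]
  exact MeasurableSet.iUnion fun p => measSet_and _ (measSet_eqG (mc2 p) (mc3 k))

lemma measSet_firstX (m n : ℕ) : MeasurableSet {w : W G | FirstX m n w} := by
  unfold FirstX
  apply measSet_and
  apply measSet_and
  refine MeasurableSet.inter (measSet_eqG (mc1 m) (mc3 n)) ?_
  refine MeasurableSet.inter ?_ ?_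
  · apply measSet_forall (Q := fun k =>
      {w : W G | 1 ≤ k → k < n → ¬ meets1 w k ∧ ¬ meets2 w k})
    intro k
    exact measSet_imp _ (measSet_imp _
      ((measSet_meets1 k).compl.inter (measSet_meets2 k).compl))
  · apply measSet_forall (Q := fun j => {w : W G | 1 ≤ j → j < m → w.1 j ≠ w.2.2 n})
    intro j
    exact measSet_imp _ (measSet_imp _ (measSet_neG (mc1 j) (mc3 n)))

lemma measSet_firstY (m n : ℕ) : MeasurableSet {w : W G | FirstY m n w} := by
  unfold FirstY
  apply measSet_and
  apply measSet_and
  refine MeasurableSet.inter (measSet_eqG (mc2 m) (mc3 n)) ?_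
  refine MeasurableSet.inter ?_ (MeasurableSet.inter (measSet_meets1 n).compl ?_)
  · apply measSet_forall (Q := fun k =>
      {w : W G | 1 ≤ k → k < n → ¬ meets1 w k ∧ ¬ meets2 w k})
    intro k
    exact measSet_imp _ (measSet_imp _
      ((measSet_meets1 k).compl.inter (measSet_meets2 k).compl))
  · apply measSet_forall (Q := fun j => {w : W G | 1 ≤ j → j < m → w.2.1 j ≠ w.2.2 n})
    intro j
    exact measSet_imp _ (measSet_imp _ (measSet_neG (mc2 j) (mc3 n)))

lemma measSet_EX (m n : ℕ) : MeasurableSet (EX (G := G) m n) := by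
  unfold EX
  exact (measSet_noCol12.inter (measSet_noCol23.compl.inter
    ((measSet_firstX m n).inter measSet_R))).congr (by ext w; unfold setA NoCol; tauto)

lemma measSet_EY (m n : ℕ) : MeasurableSet (EY (G := G) m n) := by
  unfold EY
  exact (measSet_noCol12.inter (measSet_noCol13.compl.inter
    ((measSet_firstY m n).inter measSet_R))).congr (by ext w; unfold setA NoCol; tauto)

lemma measSet_TX (m n : ℕ) : MeasurableSet (TX (G := G) m n) := by
  unfold TX
  exact (measSet_noCol12.compl.inter (measSet_noCol23.inter
    (measSet_firstX m n))).congr (by ext w; tauto)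

lemma measSet_TY (m n : ℕ) : MeasurableSet (TY (G := G) m n) := by
  unfold TY
  exact (measSet_noCol12.compl.inter (measSet_noCol13.inter
    (measSet_firstY m n))).congr (by ext w; tauto)

end Meas

section Logic

lemma firstX_meets1 {m n : ℕ} {w : W G} (h : FirstX m n w) : meets1 w n :=
  ⟨m, h.1, h.2.2.1⟩

lemma firstY_meets2 {m n : ℕ} {w : W G} (h : FirstY m n w) : meets2 w n :=
  ⟨m, h.1, h.2.2.1⟩

lemma first_n_eq {n n' : ℕ} {w : W G}
    (hme : meets1 w n ∨ meets2 w n) (hmin : ∀ k, 1 ≤ k → k < n → ¬ meets1 w k ∧ ¬ meets2 w k)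
    (hn : 1 ≤ n)
    (hme' : meets1 w n' ∨ meets2 w n')
    (hmin' : ∀ k, 1 ≤ k → k < n' → ¬ meets1 w k ∧ ¬ meets2 w k) (hn' : 1 ≤ n') :
    n = n' := by
  rcases lt_trichotomy n n' with h | h | h
  · exfalso
    rcases hme with hh | hh
    · exact (hmin' n hn h).1 hh
    · exact (hmin' n hn h).2 hh
  · exact h
  · exfalso
    rcases hme' with hh | hh
    · exact (hmin n' hn' h).1 hh
    · exact (hmin n' hn' h).2 hh

lemma firstX_unique {m n m' n' : ℕ} {w : W G} (h : FirstX m n w) (h' : FirstX m' n' w) :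
    m = m' ∧ n = n' := by
  obtain ⟨hm, hn, heq, hmin, hminm⟩ := h
  obtain ⟨hm', hn', heq', hmin', hminm'⟩ := h'
  have hnn : n = n' := first_n_eq (Or.inl ⟨m, hm, heq⟩) hmin hn (Or.inl ⟨m', hm', heq'⟩) hmin' hn'
  subst hnn
  refine ⟨?_, rfl⟩
  rcases lt_trichotomy m m' with h | h | h
  · exact absurd heq (hminm' m hm h)
  · exact h
  · exact absurd heq' (hminm m' hm' h)

lemma firstY_unique {m n m' n' : ℕ} {w : W G} (h : FirstY m n w) (h' : FirstY m' n' w) :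
    m = m' ∧ n = n' := by
  obtain ⟨hm, hn, heq, hmin, hnm1, hminm⟩ := h
  obtain ⟨hm', hn', heq', hmin', hnm1', hminm'⟩ := h'
  have hnn : n = n' := first_n_eq (Or.inr ⟨m, hm, heq⟩) hmin hn (Or.inr ⟨m', hm', heq'⟩) hmin' hn'
  subst hnn
  refine ⟨?_, rfl⟩
  rcases lt_trichotomy m m' with h | h | h
  · exact absurd heq (hminm' m hm h)
  · exact h
  · exact absurd heq' (hminm m' hm' h)

lemma firstXY_absurd {m n m' n' : ℕ} {w : W G} (h : FirstX m n w) (h' : FirstY m' n' w) :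
    False := by
  obtain ⟨hm, hn, heq, hmin, hminm⟩ := h
  obtain ⟨hm', hn', heq', hmin', hnm1', hminm'⟩ := h'
  have hnn : n = n' := first_n_eq (Or.inl ⟨m, hm, heq⟩) hmin hn (Or.inr ⟨m', hm', heq'⟩) hmin' hn'
  subst hnn
  exact hnm1' ⟨m, hm, heq⟩

lemma exhaust {w : W G} (hA : w ∈ setA) (hB : w ∉ setB) (hC : w ∉ setC) (hR : w ∈ Rset) :
    ∃ p : ℕ × ℕ, w ∈ EX p.1 p.2 ∨ w ∈ EY p.1 p.2 := by
  classical
  have hex : ∃ k, 1 ≤ k ∧ (meets1 w k ∨ meets2 w k) := by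
    unfold setB NoCol at hB
    simp only [Set.mem_setOf_eq] at hB
    push_neg at hB
    obtain ⟨a, b, ha, hb, hab⟩ := hB
    exact ⟨b, hb, Or.inl ⟨a, ha, hab⟩⟩
  set n := Nat.find hex with hn_def
  obtain ⟨hn1, hnme⟩ := Nat.find_spec hex
  have hmin : ∀ k, 1 ≤ k → k < n → ¬ meets1 w k ∧ ¬ meets2 w k := by
    intro k hk hlt
    have h2 : ¬ (1 ≤ k ∧ (meets1 w k ∨ meets2 w k)) := Nat.find_min hex hlt
    exact ⟨fun hc => h2 ⟨hk, Or.inl hc⟩, fun hc => h2 ⟨hk, Or.inr hc⟩⟩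
  by_cases hm1 : meets1 w n
  · have hex' : ∃ j, 1 ≤ j ∧ w.1 j = w.2.2 n := hm1
    set m := Nat.find hex' with hm_def
    obtain ⟨hj1, hjeq⟩ := Nat.find_spec hex'
    have hminm : ∀ j, 1 ≤ j → j < m → w.1 j ≠ w.2.2 n := by
      intro j hj hlt hc
      exact (Nat.find_min hex' hlt) ⟨hj, hc⟩
    exact ⟨(m, n), Or.inl ⟨hA, hC, ⟨hj1, hn1, hjeq, hmin, hminm⟩, hR⟩⟩
  · have hm2 : meets2 w n := by
      rcases hnme with h | h
      · exact absurd h hm1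
      · exact h
    have hex' : ∃ j, 1 ≤ j ∧ w.2.1 j = w.2.2 n := hm2
    set m := Nat.find hex' with hm_def
    obtain ⟨hj1, hjeq⟩ := Nat.find_spec hex'
    have hminm : ∀ j, 1 ≤ j → j < m → w.2.1 j ≠ w.2.2 n := by
      intro j hj hlt hc
      exact (Nat.find_min hex' hlt) ⟨hj, hc⟩
    exact ⟨(m, n), Or.inr ⟨hA, hB, ⟨hj1, hn1, hjeq, hmin, hm1, hminm⟩, hR⟩⟩

/-- Image of the (1,3)-swap on an `EX` piece lands in the corresponding `TX` piece. -/
lemma imageX {m n : ℕ} {w : W G} (hw : w ∈ EX m n) : swap13 m n w ∈ TX m n := by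
  obtain ⟨hA, hC, ⟨hm, hn, heq, hmin, hminm⟩, hR⟩ := hw
  set X := w.1 with hX
  set Y := w.2.1 with hY
  set Z := w.2.2 with hZ
  have hw1 : (swap13 m n w).1 = spl X Z m n := rfl
  have hw2 : (swap13 m n w).2.1 = Y := rfl
  have hw3 : (swap13 m n w).2.2 = spl Z X n m := rfl
  have hZ'le : ∀ {b}, b ≤ n → spl Z X n m b = Z b := fun hb => spl_le hb
  have hZ'gt : ∀ {b}, n < b → spl Z X n m b = X (m + b - n) := by
    intro b hb
    rw [spl_gt hb, show m + b - n = m + (b - n) from by omega,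
      show m + (b - n) = m + b - n from by omega]
  have hX'le : ∀ {a}, a ≤ m → spl X Z m n a = X a := fun ha => spl_le ha
  have hX'gt : ∀ {a}, m < a → spl X Z m n a = Z (n + a - m) := fun ha => spl_gt ha
  refine ⟨?_, ?_, ?_⟩
  · -- not in setA : spl X Z m n collides with Y
    intro hnc
    unfold setA NoCol at hnc
    simp only [Set.mem_setOf_eq] at hnc
    rw [hw1, hw2] at hnc
    unfold setC NoCol at hC
    simp only [Set.mem_setOf_eq] at hC
    push_neg at hC
    obtain ⟨a, b, ha, hb, hYZ⟩ := hC
    have hbn : n < b := by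
      rcases lt_trichotomy b n with h | h | h
      · exact absurd ⟨a, ha, hYZ⟩ (hmin b hb h).2
      · exfalso
        subst h
        exact hA m a hm ha (heq.trans hYZ.symm)
      · exact h
    refine hnc (m + b - n) a (by omega) ha ?_
    rw [hX'gt (show m < m + b - n from by omega),
      show n + (m + b - n) - m = b from by omega]
    exact hYZ.symm
  · -- in setC : Y does not collide with spl Z X n m
    intro a b ha hb
    rw [hw2, hw3]
    rcases lt_trichotomy b n with h | h | h
    · rw [hZ'le (le_of_lt h)]
      intro hc
      exact (hmin b hb h).2 ⟨a, ha, hc⟩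
    · subst h
      rw [hZ'le (le_refl b), ← heq]
      intro hc
      exact hA m a hm ha hc.symm
    · rw [hZ'gt h]
      intro hc
      exact hA (m + b - n) a (by omega) ha hc.symm
  · -- FirstX m n for the swapped configuration
    refine ⟨hm, hn, ?_, ?_, ?_⟩
    · rw [hw1, hw3, hX'le (le_refl m), hZ'le (le_refl n)]
      exact heq
    · intro k hk hkn
      constructor
      · rintro ⟨p, hp, hpe⟩
        rw [hw1, hw3, hZ'le (le_of_lt hkn)] at hpe
        by_cases hpm : p ≤ m
        · rw [hX'le hpm] at hpe
          exact (hmin k hk hkn).1 ⟨p, hp, hpe⟩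
        · push_neg at hpm
          rw [hX'gt hpm] at hpe
          exact hR k (n + p - m) (by omega) hpe.symm
      · rintro ⟨p, hp, hpe⟩
        rw [hw2, hw3, hZ'le (le_of_lt hkn)] at hpe
        exact (hmin k hk hkn).2 ⟨p, hp, hpe⟩
    · intro j hj hjm
      rw [hw1, hw3, hX'le (le_of_lt hjm), hZ'le (le_refl n)]
      exact hminm j hj hjm

/-- Image of the (2,3)-swap on an `EY` piece lands in the corresponding `TY` piece. -/
lemma imageY {m n : ℕ} {w : W G} (hw : w ∈ EY m n) :
    Prod.map id (pswap m n) w ∈ TY m n := by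
  obtain ⟨hA, hB, ⟨hm, hn, heq, hmin, hnm1, hminm⟩, hR⟩ := hw
  set X := w.1 with hX
  set Y := w.2.1 with hY
  set Z := w.2.2 with hZ
  have hw1 : (Prod.map id (pswap m n) w).1 = X := rfl
  have hw2 : (Prod.map id (pswap m n) w).2.1 = spl Y Z m n := rfl
  have hw3 : (Prod.map id (pswap m n) w).2.2 = spl Z Y n m := rfl
  have hZ'le : ∀ {b}, b ≤ n → spl Z Y n m b = Z b := fun hb => spl_le hb
  have hZ'gt : ∀ {b}, n < b → spl Z Y n m b = Y (m + b - n) := fun hb => spl_gt hb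
  have hY'le : ∀ {a}, a ≤ m → spl Y Z m n a = Y a := fun ha => spl_le ha
  have hY'gt : ∀ {a}, m < a → spl Y Z m n a = Z (n + a - m) := fun ha => spl_gt ha
  refine ⟨?_, ?_, ?_⟩
  · -- not in setA : X collides with spl Y Z m n
    intro hnc
    unfold setA NoCol at hnc
    simp only [Set.mem_setOf_eq] at hnc
    rw [hw1, hw2] at hnc
    unfold setB NoCol at hB
    simp only [Set.mem_setOf_eq] at hB
    push_neg at hB
    obtain ⟨a, b, ha, hb, hXZ⟩ := hB
    have hbn : n < b := by
      rcases lt_trichotomy b n with h | h | h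
      · exact absurd ⟨a, ha, hXZ⟩ (hmin b hb h).1
      · exfalso
        subst h
        exact hnm1 ⟨a, ha, hXZ⟩
      · exact h
    refine hnc a (m + b - n) ha (by omega) ?_
    rw [hY'gt (show m < m + b - n from by omega),
      show n + (m + b - n) - m = b from by omega]
    exact hXZ
  · -- in setB : X does not collide with spl Z Y n m
    intro a b ha hb
    rw [hw1, hw3]
    rcases lt_trichotomy b n with h | h | h
    · rw [hZ'le (le_of_lt h)]
      intro hc
      exact (hmin b hb h).1 ⟨a, ha, hc⟩
    · subst h
      rw [hZ'le (le_refl b), ← heq]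
      intro hc
      exact hA a m ha hm hc
    · rw [hZ'gt h]
      intro hc
      exact hA a (m + b - n) ha (by omega) hc
  · -- FirstY m n for the swapped configuration
    refine ⟨hm, hn, ?_, ?_, ?_, ?_⟩
    · rw [hw2, hw3, hY'le (le_refl m), hZ'le (le_refl n)]
      exact heq
    · intro k hk hkn
      constructor
      · rintro ⟨p, hp, hpe⟩
        rw [hw1, hw3, hZ'le (le_of_lt hkn)] at hpe
        exact (hmin k hk hkn).1 ⟨p, hp, hpe⟩
      · rintro ⟨p, hp, hpe⟩
        rw [hw2, hw3, hZ'le (le_of_lt hkn)] at hpe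
        by_cases hpm : p ≤ m
        · rw [hY'le hpm] at hpe
          exact (hmin k hk hkn).2 ⟨p, hp, hpe⟩
        · push_neg at hpm
          rw [hY'gt hpm] at hpe
          exact hR k (n + p - m) (by omega) hpe.symm
    · rintro ⟨p, hp, hpe⟩
      rw [hw1, hw3, hZ'le (le_refl n)] at hpe
      exact hnm1 ⟨p, hp, hpe⟩
    · intro j hj hjm
      rw [hw2, hw3, hY'le (le_of_lt hjm), hZ'le (le_refl n)]
      exact hminm j hj hjm

end Logic

end Events

section Final

variable [Countable G] [MeasurableSpace G] [MeasurableSingletonClass G]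
variable {K : G → Measure G}
variable {P : G → Measure (ℕ → G)} [∀ x, IsProbabilityMeasure (P x)]

/-- the pairwise no-collision event -/
def C0 : Set ((ℕ → G) × (ℕ → G)) := {q | NoCol q.1 q.2}

lemma measSet_C0 : MeasurableSet (C0 (G := G)) := by
  unfold C0 NoCol
  apply measSet_forall2 (Q := fun a b =>
    {q : (ℕ → G) × (ℕ → G) | 1 ≤ a → 1 ≤ b → q.1 a ≠ q.2 b})
  intro a b
  exact measSet_imp _ (measSet_imp _ (measSet_neG (measc1 a) (measc2 b)))

lemma measg13 : Measurable fun w : W G => (w.1, w.2.2) := by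
  apply Measurable.prod
  · show Measurable fun w : W G => w.1
    exact measurable_fst
  · show Measurable fun w : W G => w.2.2
    exact measurable_snd.comp measurable_snd

lemma measg12 : Measurable fun w : W G => (w.1, w.2.1) := by
  apply Measurable.prod
  · show Measurable fun w : W G => w.1
    exact measurable_fst
  · show Measurable fun w : W G => w.2.1
    exact measurable_fst.comp measurable_snd

variable (hP : ∀ x, IsPathLaw K x (P x))

include hP in
lemma map13_eq (z1 z2 z3 : G) :
    ((P z1).prod ((P z2).prod (P z3))).map (fun w : W G => (w.1, w.2.2)) =
      (P z1).prod (P z3) := by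
  haveI : IsProbabilityMeasure
      (((P z1).prod ((P z2).prod (P z3))).map (fun w : W G => (w.1, w.2.2))) :=
    Measure.isProbabilityMeasure_map measg13.aemeasurable
  refine ext_of_generate_finite (PairCylSets 0) (pair_eq_gen 0)
    (isPiSystem_pairCylSets 0) ?_ ?_
  · rintro S ⟨N, hN, u, t, rfl⟩
    have hpre : (fun w : W G => (w.1, w.2.2)) ⁻¹' (Cyl N u ×ˢ Cyl N t) =
        Cyl N u ×ˢ ((Set.univ : Set (ℕ → G)) ×ˢ Cyl N t) := by
      ext w
      simp only [Set.mem_preimage, Set.mem_prod, Set.mem_univ]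
      tauto
    rw [Measure.map_apply measg13 ((measSet_cyl N u).prod (measSet_cyl N t)), hpre,
      Measure.prod_prod, Measure.prod_prod, Measure.prod_prod, measure_univ, one_mul]
  · rw [Measure.map_apply measg13 MeasurableSet.univ]
    simp

include hP in
lemma map12_eq (z1 z2 z3 : G) :
    ((P z1).prod ((P z2).prod (P z3))).map (fun w : W G => (w.1, w.2.1)) =
      (P z1).prod (P z2) := by
  haveI : IsProbabilityMeasure
      (((P z1).prod ((P z2).prod (P z3))).map (fun w : W G => (w.1, w.2.1))) :=
    Measure.isProbabilityMeasure_map measg12.aemeasurable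
  refine ext_of_generate_finite (PairCylSets 0) (pair_eq_gen 0)
    (isPiSystem_pairCylSets 0) ?_ ?_
  · rintro S ⟨N, hN, u, t, rfl⟩
    have hpre : (fun w : W G => (w.1, w.2.1)) ⁻¹' (Cyl N u ×ˢ Cyl N t) =
        Cyl N u ×ˢ (Cyl N t ×ˢ (Set.univ : Set (ℕ → G))) := by
      ext w
      simp only [Set.mem_preimage, Set.mem_prod, Set.mem_univ]
      tauto
    rw [Measure.map_apply measg12 ((measSet_cyl N u).prod (measSet_cyl N t)), hpre,
      Measure.prod_prod, Measure.prod_prod, Measure.prod_prod, measure_univ, mul_one]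
  · rw [Measure.map_apply measg12 MeasurableSet.univ]
    simp

include hP in
lemma mu_setA (x y : G) :
    ((P x).prod ((P x).prod (P y))) (setA (G := G)) = ((P x).prod (P x)) (C0 (G := G)) := by
  have : setA (G := G) = (fun w : W G => (w.1, w.2.1)) ⁻¹' C0 := rfl
  rw [this, ← Measure.map_apply measg12 measSet_C0, map12_eq hP]

include hP in
lemma mu_setB (x y : G) :
    ((P x).prod ((P x).prod (P y))) (setB (G := G)) = ((P x).prod (P y)) (C0 (G := G)) := by
  have : setB (G := G) = (fun w : W G => (w.1, w.2.2)) ⁻¹' C0 := rfl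
  rw [this, ← Measure.map_apply measg13 measSet_C0, map13_eq hP]

lemma mu_setC (x y : G) :
    ((P x).prod ((P x).prod (P y))) (setC (G := G)) = ((P x).prod (P y)) (C0 (G := G)) := by
  have e : setC (G := G) = (Set.univ : Set (ℕ → G)) ×ˢ C0 := by
    ext w
    simp only [Set.mem_prod, Set.mem_univ, true_and]
    exact Iff.rfl
  rw [e, Measure.prod_prod, measure_univ, one_mul]

variable (hK : ∀ x, IsProbabilityMeasure (K x))

include hK hP in
lemma mu_Rc_null (hcf : CycleFree K) (x y : G) :
    ((P x).prod ((P x).prod (P y))) (Rset (G := G))ᶜ = 0 := by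
  have e : (Rset (G := G))ᶜ = (Set.univ : Set (ℕ → G)) ×ˢ
      ((Set.univ : Set (ℕ → G)) ×ˢ {ω : ℕ → G | ∃ i j, i < j ∧ ω i = ω j}) := by
    ext w
    simp only [Set.mem_compl_iff, Set.mem_prod, Set.mem_univ, true_and, Rset,
      Set.mem_setOf_eq]
    push_neg
    rfl
  rw [e, Measure.prod_prod, Measure.prod_prod, P_revisit_null hK hP hcf y]
  simp

include hK hP in
theorem main_ineq (hcf : CycleFree K) (x y : G) :
    ((P x).prod ((P x).prod (P y))) (setA (G := G)) ≤
      ((P x).prod ((P x).prod (P y))) (setB (G := G)) +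
        ((P x).prod ((P x).prod (P y))) (setC (G := G)) := by
  classical
  set μ := (P x).prod ((P x).prod (P y)) with hμ
  have hAm : MeasurableSet (setA (G := G)) := measSet_noCol12
  have hBm : MeasurableSet (setB (G := G)) := measSet_noCol13
  have hCm : MeasurableSet (setC (G := G)) := measSet_noCol23
  have hRm : MeasurableSet (Rset (G := G)) := measSet_R
  -- decomposition of A
  have h1 : μ setA = μ (setA ∩ setB) + μ (setA ∩ setBᶜ) := by
    rw [← measure_inter_add_diff setA hBm, Set.diff_eq]
  have h2 : μ (setA ∩ setBᶜ) =
      μ (setA ∩ setBᶜ ∩ setC) + μ (setA ∩ setBᶜ ∩ setCᶜ) := by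
    rw [← measure_inter_add_diff (setA ∩ setBᶜ) hCm, Set.diff_eq]
  -- intersect with R
  have h3 : μ (setA ∩ setBᶜ ∩ setCᶜ) = μ (setA ∩ setBᶜ ∩ setCᶜ ∩ Rset) := by
    rw [← measure_inter_add_diff (setA ∩ setBᶜ ∩ setCᶜ) hRm, Set.diff_eq]
    have : μ (setA ∩ setBᶜ ∩ setCᶜ ∩ Rsetᶜ) = 0 :=
      measure_mono_null (Set.inter_subset_right) (mu_Rc_null hP hK hcf x y)
    rw [this, add_zero]
  -- covering of the last piece
  have hEXsub : ∀ m n : ℕ, EX (G := G) m n ⊆ setA ∩ setBᶜ ∩ setCᶜ ∩ Rset := by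
    rintro m n w ⟨hA, hC, hFX, hR⟩
    refine ⟨⟨⟨hA, ?_⟩, hC⟩, hR⟩
    intro hno
    exact hno m n hFX.1 hFX.2.1 hFX.2.2.1
  have hEYsub : ∀ m n : ℕ, EY (G := G) m n ⊆ setA ∩ setBᶜ ∩ setCᶜ ∩ Rset := by
    rintro m n w ⟨hA, hB, hFY, hR⟩
    refine ⟨⟨⟨hA, hB⟩, ?_⟩, hR⟩
    intro hno
    exact hno m n hFY.1 hFY.2.1 hFY.2.2.1
  have h4 : setA ∩ setBᶜ ∩ setCᶜ ∩ Rset =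
      (⋃ p : ℕ × ℕ, EX (G := G) p.1 p.2) ∪ (⋃ p : ℕ × ℕ, EY (G := G) p.1 p.2) := by
    apply Set.Subset.antisymm
    · rintro w ⟨⟨⟨hA, hB⟩, hC⟩, hR⟩
      obtain ⟨p, hp⟩ := exhaust hA hB hC hR
      rcases hp with h | h
      · exact Or.inl (Set.mem_iUnion.mpr ⟨p, h⟩)
      · exact Or.inr (Set.mem_iUnion.mpr ⟨p, h⟩)
    · intro w hw
      rcases hw with hw | hw
      · obtain ⟨p, hp⟩ := Set.mem_iUnion.mp hw
        exact hEXsub p.1 p.2 hp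
      · obtain ⟨p, hp⟩ := Set.mem_iUnion.mp hw
        exact hEYsub p.1 p.2 hp
  have hEXm : ∀ p : ℕ × ℕ, MeasurableSet (EX (G := G) p.1 p.2) :=
    fun p => measSet_EX p.1 p.2
  have hEYm : ∀ p : ℕ × ℕ, MeasurableSet (EY (G := G) p.1 p.2) :=
    fun p => measSet_EY p.1 p.2
  have hTXm : ∀ p : ℕ × ℕ, MeasurableSet (TX (G := G) p.1 p.2) :=
    fun p => measSet_TX p.1 p.2
  have hTYm : ∀ p : ℕ × ℕ, MeasurableSet (TY (G := G) p.1 p.2) :=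
    fun p => measSet_TY p.1 p.2
  have hdEX : Pairwise (Function.onFun Disjoint fun p : ℕ × ℕ => EX (G := G) p.1 p.2) := by
    intro p q hpq
    refine Set.disjoint_left.mpr fun w hw hw' => hpq ?_
    obtain ⟨hmm', hnn'⟩ := firstX_unique hw.2.2.1 hw'.2.2.1
    exact Prod.ext_iff.mpr ⟨hmm', hnn'⟩
  have hdEY : Pairwise (Function.onFun Disjoint fun p : ℕ × ℕ => EY (G := G) p.1 p.2) := by
    intro p q hpq
    refine Set.disjoint_left.mpr fun w hw hw' => hpq ?_
    obtain ⟨hmm', hnn'⟩ := firstY_unique hw.2.2.1 hw'.2.2.1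
    exact Prod.ext_iff.mpr ⟨hmm', hnn'⟩
  have hdTX : Pairwise (Function.onFun Disjoint fun p : ℕ × ℕ => TX (G := G) p.1 p.2) := by
    intro p q hpq
    refine Set.disjoint_left.mpr fun w hw hw' => hpq ?_
    obtain ⟨hmm', hnn'⟩ := firstX_unique hw.2.2 hw'.2.2
    exact Prod.ext_iff.mpr ⟨hmm', hnn'⟩
  have hdTY : Pairwise (Function.onFun Disjoint fun p : ℕ × ℕ => TY (G := G) p.1 p.2) := by
    intro p q hpq
    refine Set.disjoint_left.mpr fun w hw hw' => hpq ?_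
    obtain ⟨hmm', hnn'⟩ := firstY_unique hw.2.2 hw'.2.2
    exact Prod.ext_iff.mpr ⟨hmm', hnn'⟩
  have hdXY : Disjoint (⋃ p : ℕ × ℕ, EX (G := G) p.1 p.2)
      (⋃ p : ℕ × ℕ, EY (G := G) p.1 p.2) := by
    refine Set.disjoint_left.mpr fun w hw hw' => ?_
    obtain ⟨p, hp⟩ := Set.mem_iUnion.mp hw
    obtain ⟨q, hq⟩ := Set.mem_iUnion.mp hw'
    exact firstXY_absurd hp.2.2.1 hq.2.2.1
  have hsplit : μ (setA ∩ setBᶜ ∩ setCᶜ ∩ Rset) =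
      (∑' p : ℕ × ℕ, μ (EX (G := G) p.1 p.2)) +
        ∑' p : ℕ × ℕ, μ (EY (G := G) p.1 p.2) := by
    rw [h4, measure_union hdXY (MeasurableSet.iUnion hEYm),
      measure_iUnion hdEX hEXm, measure_iUnion hdEY hEYm]
  have hEXle : ∀ p : ℕ × ℕ, μ (EX (G := G) p.1 p.2) ≤ μ (TX (G := G) p.1 p.2) := by
    intro p
    have hsub2 : EX (G := G) p.1 p.2 ⊆ swap13 p.1 p.2 ⁻¹' TX p.1 p.2 :=
      fun w hw => imageX hw
    have hTsub : TX (G := G) p.1 p.2 ⊆ {w : W G | w.1 p.1 = w.2.2 p.2} :=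
      fun w hw => hw.2.2.2.2.1
    calc μ (EX (G := G) p.1 p.2) ≤ μ (swap13 p.1 p.2 ⁻¹' TX p.1 p.2) :=
          measure_mono hsub2
      _ = μ (TX (G := G) p.1 p.2) :=
          swap13_measure hP y x p.1 p.2 (measSet_TX p.1 p.2) hTsub
  have hEYle : ∀ p : ℕ × ℕ, μ (EY (G := G) p.1 p.2) ≤ μ (TY (G := G) p.1 p.2) := by
    intro p
    have hsub2 : EY (G := G) p.1 p.2 ⊆ Prod.map id (pswap p.1 p.2) ⁻¹' TY p.1 p.2 :=
      fun w hw => imageY hw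
    have hTsub : TY (G := G) p.1 p.2 ⊆ {w : W G | w.2.1 p.1 = w.2.2 p.2} :=
      fun w hw => hw.2.2.2.2.1
    calc μ (EY (G := G) p.1 p.2) ≤ μ (Prod.map id (pswap p.1 p.2) ⁻¹' TY p.1 p.2) :=
          measure_mono hsub2
      _ = μ (TY (G := G) p.1 p.2) :=
          swap23_measure hP x x y p.1 p.2 (measSet_TY p.1 p.2) hTsub
  have hX2 : (∑' p : ℕ × ℕ, μ (EX (G := G) p.1 p.2)) ≤ μ (setAᶜ ∩ setC) := by
    calc (∑' p : ℕ × ℕ, μ (EX (G := G) p.1 p.2))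
        ≤ ∑' p : ℕ × ℕ, μ (TX (G := G) p.1 p.2) := ENNReal.tsum_le_tsum hEXle
      _ = μ (⋃ p : ℕ × ℕ, TX (G := G) p.1 p.2) := (measure_iUnion hdTX hTXm).symm
      _ ≤ μ (setAᶜ ∩ setC) :=
          measure_mono (Set.iUnion_subset fun p w hw => ⟨hw.1, hw.2.1⟩)
  have hY2 : (∑' p : ℕ × ℕ, μ (EY (G := G) p.1 p.2)) ≤ μ (setAᶜ ∩ setB) := by
    calc (∑' p : ℕ × ℕ, μ (EY (G := G) p.1 p.2))
        ≤ ∑' p : ℕ × ℕ, μ (TY (G := G) p.1 p.2) := ENNReal.tsum_le_tsum hEYle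
      _ = μ (⋃ p : ℕ × ℕ, TY (G := G) p.1 p.2) := (measure_iUnion hdTY hTYm).symm
      _ ≤ μ (setAᶜ ∩ setB) :=
          measure_mono (Set.iUnion_subset fun p w hw => ⟨hw.1, hw.2.1⟩)
  have hBside : μ (setA ∩ setB) + μ (setAᶜ ∩ setB) ≤ μ setB := by
    rw [← measure_union (Set.disjoint_left.mpr fun w hw hw' => hw'.1 hw.1)
      (hAm.compl.inter hBm)]
    exact measure_mono (Set.union_subset Set.inter_subset_right Set.inter_subset_right)
  have hCside : μ (setA ∩ setBᶜ ∩ setC) + μ (setAᶜ ∩ setC) ≤ μ setC := by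
    rw [← measure_union (Set.disjoint_left.mpr fun w hw hw' => hw'.1 hw.1.1)
      (hAm.compl.inter hCm)]
    exact measure_mono (Set.union_subset Set.inter_subset_right Set.inter_subset_right)
  calc μ setA = μ (setA ∩ setB) + μ (setA ∩ setBᶜ) := h1
    _ = μ (setA ∩ setB) + (μ (setA ∩ setBᶜ ∩ setC) + μ (setA ∩ setBᶜ ∩ setCᶜ)) := by
        rw [h2]
    _ = μ (setA ∩ setB) + (μ (setA ∩ setBᶜ ∩ setC) +
        ((∑' p : ℕ × ℕ, μ (EX (G := G) p.1 p.2)) +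
          ∑' p : ℕ × ℕ, μ (EY (G := G) p.1 p.2))) := by
        rw [h3, hsplit]
    _ ≤ μ (setA ∩ setB) + (μ (setA ∩ setBᶜ ∩ setC) +
        (μ (setAᶜ ∩ setC) + μ (setAᶜ ∩ setB))) :=
        add_le_add_right (add_le_add_right (add_le_add hX2 hY2) _) _
    _ = (μ (setA ∩ setB) + μ (setAᶜ ∩ setB)) +
        (μ (setA ∩ setBᶜ ∩ setC) + μ (setAᶜ ∩ setC)) := by ring
    _ ≤ μ setB + μ setC := add_le_add hBside hCside

include hK hP in
theorem no_collision_prob_bound (hcf : CycleFree K) (x y : G) :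
    ((P x).prod (P x)) {q | collisions q.1 q.2 = ∅} / 3
      ≤ ((P x).prod (P y)) {q | collisions q.1 q.2 = ∅} := by
  classical
  have hC0 : ∀ z1 z2 : G, {q : (ℕ → G) × (ℕ → G) | collisions q.1 q.2 = ∅} = C0 (G := G) := by
    intro z1 z2
    ext q
    simp only [Set.mem_setOf_eq, C0, NoCol]
    constructor
    · intro h a b ha hb hc
      exact (Set.eq_empty_iff_forall_notMem.mp h (a, b)) ⟨ha, hb, hc⟩
    · intro h
      exact Set.eq_empty_iff_forall_notMem.mpr fun p hp => h p.1 p.2 hp.1 hp.2.1 hp.2.2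
  have hmain := main_ineq hP hK hcf x y
  rw [mu_setA hP x y, mu_setB hP x y, mu_setC x y] at hmain
  rw [hC0 x x]
  refine ENNReal.div_le_of_le_mul ?_
  calc ((P x).prod (P x)) (C0 (G := G)) ≤
      ((P x).prod (P y)) (C0 (G := G)) + ((P x).prod (P y)) (C0 (G := G)) := hmain
    _ = ((P x).prod (P y)) (C0 (G := G)) * 2 := by ring
    _ ≤ ((P x).prod (P y)) (C0 (G := G)) * 3 :=
        mul_le_mul_right (by norm_num) _

end Final

/-- For a cycle-free Markov kernel on a countable set, the no-collision
probability satisfies `p(x,y) ≥ p(x,x)/3`. -/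
theorem no_collision_prob_lower_bound
    [Countable G] [MeasurableSpace G] [MeasurableSingletonClass G]
    (K : G → Measure G) (hK : ∀ x, IsProbabilityMeasure (K x)) (hcf : CycleFree K)
    (P : G → Measure (ℕ → G)) [∀ x, IsProbabilityMeasure (P x)]
    (hP : ∀ x, IsPathLaw K x (P x)) (x y : G) :
    ((P x).prod (P x)) {q | collisions q.1 q.2 = ∅} / 3
      ≤ ((P x).prod (P y)) {q | collisions q.1 q.2 = ∅} :=
  no_collision_prob_bound hP hK hcf x y

end CMTPaper
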